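/- arXiv:2507.19986 — 4 statements merged into one kernel-verified Lean document; each statement's English description precedes it below -/
import Mathlib

section
/- Let a = -0.4527, b = 0.0218, c = 0.86 and define φ̃(x) = exp(a·x^c + b) for x > 0. If x > 0 and y > 0 satisfy the Gaussian-approximation odd-branch recursion φ̃(y) = 2·φ̃(x) − φ̃(x)², then y^c − x^c ≥ (ln 2)/a; equivalently, the decrease of the c-th power of the LLR mean in one odd polarization step is at most |ln 2 / a|. -/
open Real

/-- Gaussian-approximation odd-branch step: if `φ̃(y) = 2 φ̃(x) − φ̃(x)²` with
`φ̃(x) = exp(a x^c + b)`, `(a,b,c) = (−0.4527, 0.0218, 0.86)`, then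
`y^c − x^c ≥ (ln 2)/a`. -/
theorem ga_odd_branch_rpow_decrease (x y : ℝ) (hx : 0 < x) (hy : 0 < y)
    (hrec : Real.exp ((-0.4527) * y ^ (0.86 : ℝ) + 0.0218) =
        2 * Real.exp ((-0.4527) * x ^ (0.86 : ℝ) + 0.0218) -
          (Real.exp ((-0.4527) * x ^ (0.86 : ℝ) + 0.0218)) ^ 2) :
    y ^ (0.86 : ℝ) - x ^ (0.86 : ℝ) ≥ Real.log 2 / (-0.4527) := by
  set u := (-0.4527) * x ^ (0.86 : ℝ) + 0.0218 with hu
  set v := (-0.4527) * y ^ (0.86 : ℝ) + 0.0218 with hv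
  have h2 : Real.exp v ≤ 2 * Real.exp u := by nlinarith [sq_nonneg (Real.exp u)]
  have h3 : 2 * Real.exp u = Real.exp (Real.log 2 + u) := by
    rw [Real.exp_add (Real.log 2) u, Real.exp_log two_pos]
  have h4 : v ≤ Real.log 2 + u := by
    have := h2; rw [h3] at this; exact Real.exp_le_exp.mp this
  rw [ge_iff_le, div_le_iff_of_neg (by norm_num : (-0.4527:ℝ) < 0)]
  rw [hu, hv] at h4; linarith
end

section
/- Let K = 3.73 and ζ > 0. Let s ≤ n be natural numbers, m : ℕ → ℝ a sequence, and p : ℕ → {0,1} a bit sequence. Assume: (i) for every i with s ≤ i < n, if p(i+1) = 0 then m(i+1) ≥ m(i) − K·ln 2, and if p(i+1) = 1 then m(i+1) = 2·m(i); (ii) m(i) ≥ −K·ln ζ for every i with s ≤ i ≤ n. Then m(n) ≥ −K·(n−s)·ln 2 − K·ln(ζ/2)·(Σ_{i=s+1}^{n} p(i)) − K·ln ζ. -/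
open Real Finset

/-- Recursive lower bound on the LLR mean of a splitting channel: with `K = 3.73`, an odd step
(`p = 0`) decreases the LLR mean by at most `K ln 2`, an even step (`p = 1`) doubles it, and
if the trajectory stays in `T_s(ζ)`, then
`m(n) ≥ −K(n−s) ln 2 − K ln(ζ/2) Σ_{i=s+1}^n p(i) − K ln ζ`. -/
theorem ga_recursion_lower_bound (ζ : ℝ) (hζ : 0 < ζ) (s n : ℕ) (hsn : s ≤ n)
    (m : ℕ → ℝ) (p : ℕ → ℕ) (hp : ∀ i, p i = 0 ∨ p i = 1)
    (hstep : ∀ i, s ≤ i → i < n →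
      (p (i + 1) = 0 → m (i + 1) ≥ m i - 3.73 * Real.log 2) ∧
      (p (i + 1) = 1 → m (i + 1) = 2 * m i))
    (hT : ∀ i, s ≤ i → i ≤ n → m i ≥ -3.73 * Real.log ζ) :
    m n ≥ -3.73 * ((n : ℝ) - s) * Real.log 2
        - 3.73 * Real.log (ζ / 2) * (∑ i ∈ Finset.Icc (s + 1) n, (p i : ℝ))
        - 3.73 * Real.log ζ := by
  revert hstep hT
  induction n, hsn using Nat.le_induction with
  | base =>
    intro hstep hT
    have h := hT s le_rfl le_rfl
    rw [Finset.Icc_eq_empty (by omega)]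
    simp
    linarith
  | succ n hn ih =>
    intro hstep hT
    have ihb := ih (fun i hi hi' => hstep i hi (by omega))
      (fun i hi hi' => hT i hi (by omega))
    have hsum : (∑ i ∈ Finset.Icc (s+1) (n+1), (p i : ℝ))
        = (∑ i ∈ Finset.Icc (s+1) n, (p i : ℝ)) + p (n+1) :=
      Finset.sum_Icc_succ_top (by omega) _
    have hlog : Real.log (ζ/2) = Real.log ζ - Real.log 2 :=
      Real.log_div (ne_of_gt hζ) (by norm_num)
    have hTn := hT n (by omega) (by omega)
    have hstepn := hstep n (by omega) (by omega)
    rw [hlog] at ihb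
    rw [hsum, hlog]
    rcases hp (n+1) with h0 | h1
    · have h := hstepn.1 h0
      rw [h0]
      push_cast
      nlinarith [ihb]
    · have h := hstepn.2 h1
      rw [h1]
      push_cast
      nlinarith [ihb, hTn]
end

section
/- Let K = 3.73 and ζ = 2^{-4}. Let s ≤ n be natural numbers, m : ℕ → ℝ, and p : ℕ → {0,1}. Assume: (i) for every i with s ≤ i < n, if p(i+1) = 0 then m(i+1) ≥ m(i) − K·ln 2, and if p(i+1) = 1 then m(i+1) = 2·m(i); (ii) m(i) ≥ 4·K·ln 2 (= −K·ln ζ) for every i with s ≤ i ≤ n; (iii) Σ_{i=s+1}^{n} p(i) ≥ (1/2 − 1/20)·(n−s) = (9/20)·(n−s). Then m(n) ≥ 4.66·n·ln 2 − 4.66·s·ln 2 + 14.92·ln 2. -/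
open Real Finset

/-- Specialization of the Gaussian-approximation recursion bound to `ζ = 2^{−4}`, `η = 1/20`:
if odd steps lose at most `3.73 ln 2`, even steps double, the trajectory stays above
`4 · 3.73 · ln 2 = 14.92 ln 2`, and the fraction of doubling steps is at least `9/20`, then
`m(n) ≥ 4.66 n ln 2 − 4.66 s ln 2 + 14.92 ln 2`. -/
theorem ga_recursion_bound_specialized (s n : ℕ) (hsn : s ≤ n)
    (m : ℕ → ℝ) (p : ℕ → ℕ) (hp : ∀ i, p i = 0 ∨ p i = 1)
    (hstep : ∀ i, s ≤ i → i < n →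
      (p (i + 1) = 0 → m (i + 1) ≥ m i - 3.73 * Real.log 2) ∧
      (p (i + 1) = 1 → m (i + 1) = 2 * m i))
    (hT : ∀ i, s ≤ i → i ≤ n → m i ≥ 4 * 3.73 * Real.log 2)
    (hU : (∑ i ∈ Finset.Icc (s + 1) n, (p i : ℝ)) ≥ (9 / 20) * ((n : ℝ) - s)) :
    m n ≥ 4.66 * (n : ℝ) * Real.log 2 - 4.66 * (s : ℝ) * Real.log 2 + 14.92 * Real.log 2 := by
  have hlog : 0 < Real.log 2 := Real.log_pos (by norm_num)
  -- key inductive bound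
  have key : ∀ k, s ≤ k → k ≤ n →
      m k ≥ 3.73 * Real.log 2 *
        (-(((k : ℝ) - s)) + 5 * ∑ i ∈ Finset.Icc (s + 1) k, (p i : ℝ) + 4) := by
    intro k hk
    induction k, hk using Nat.le_induction with
    | base =>
      intro _
      have : Finset.Icc (s + 1) s = ∅ := Finset.Icc_eq_empty (by omega)
      rw [this]
      have := hT s le_rfl hsn; simp only [Finset.sum_empty]; linarith
    | succ k hk ih =>
      intro hkn
      have hkn' : k < n := hkn
      have ih' := ih (le_of_lt hkn')
      have hsum : ∑ i ∈ Finset.Icc (s + 1) (k + 1), (p i : ℝ)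
          = (∑ i ∈ Finset.Icc (s + 1) k, (p i : ℝ)) + (p (k + 1) : ℝ) := by
        rw [← Finset.sum_Icc_succ_top (by omega)]
      have hstepk := hstep k hk hkn'
      rcases hp (k + 1) with h0 | h1
      · have h := hstepk.1 h0
        rw [hsum, h0]
        push_cast
        nlinarith [hlog]
      · have h := hstepk.2 h1
        have hTk := hT k hk (le_of_lt hkn')
        rw [hsum, h1, h]
        push_cast
        nlinarith [hlog]
  have hkey := key n hsn le_rfl
  have hns : (0:ℝ) ≤ (n : ℝ) - s := by
    have : (s:ℝ) ≤ n := by exact_mod_cast hsn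
    linarith
  nlinarith [hlog, hkey, hU, mul_nonneg hns hlog.le]
end

section
/- Let s ≤ n be natural numbers and let m be a real number with m ≥ 4.66·n·ln 2 − 4.66·s·ln 2 + 14.92·ln 2. Then the bit error rate under Gaussian approximation satisfies Q(√(m/2)) < 2^{−2.33(n−s)/2 − 3.73}, where Q(x) = (1/√(2π)) ∫_{x}^{∞} e^{−t²/2} dt. In particular, the error probability of the corresponding splitting channel of a polar code of length N = 2^n decays as O(N^{−2.33/2}). -/
open Real MeasureTheory

/-- The Gaussian Q-function: the tail of the standard normal distribution. -/
noncomputable def gaussQ (x : ℝ) : ℝ :=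
  (1 / Real.sqrt (2 * Real.pi)) * ∫ t in Set.Ioi x, Real.exp (-t ^ 2 / 2)

lemma integral_mul_exp_tail (x : ℝ) :
    ∫ t in Set.Ioi x, t * Real.exp (-t ^ 2 / 2) = Real.exp (-x ^ 2 / 2) := by
  have hderiv : ∀ t ∈ Set.Ici x, HasDerivAt (fun t : ℝ => -Real.exp (-t ^ 2 / 2))
      (t * Real.exp (-t ^ 2 / 2)) t := by
    intro t _
    have h1 : HasDerivAt (fun t : ℝ => -t ^ 2 / 2) (-t) t := by
      have := ((hasDerivAt_pow 2 t).neg).div_const 2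
      refine this.congr_deriv ?_
      simp; ring
    have h2 := (h1.exp).neg
    refine h2.congr_deriv ?_
    ring
  have hint : IntegrableOn (fun t : ℝ => t * Real.exp (-t ^ 2 / 2)) (Set.Ioi x) := by
    have := integrable_mul_exp_neg_mul_sq (b := (1 : ℝ) / 2) (by norm_num)
    have h : (fun t : ℝ => t * Real.exp (-t ^ 2 / 2)) =
        fun t : ℝ => t * Real.exp (-(1 / 2) * t ^ 2) := by
      funext t; ring_nf
    rw [h]
    exact this.integrableOn
  have htend : Filter.Tendsto (fun t : ℝ => -Real.exp (-t ^ 2 / 2)) Filter.atTop (nhds 0) := by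
    rw [show (0 : ℝ) = -0 by ring]
    refine Filter.Tendsto.neg ?_
    apply Real.tendsto_exp_atBot.comp
    have h : Filter.Tendsto (fun t : ℝ => t ^ 2 / 2) Filter.atTop Filter.atTop :=
      (Filter.tendsto_pow_atTop (by norm_num)).atTop_div_const (by norm_num)
    simpa [neg_div] using Filter.tendsto_neg_atBot_iff.mpr h
  have := integral_Ioi_of_hasDerivAt_of_tendsto' hderiv hint htend
  simpa using this

lemma qtail_le {x : ℝ} (hx : 1 ≤ x) :
    ∫ t in Set.Ioi x, Real.exp (-t ^ 2 / 2) ≤ Real.exp (-x ^ 2 / 2) := by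
  rw [← integral_mul_exp_tail x]
  apply setIntegral_mono_on
  · have := integrable_exp_neg_mul_sq (b := (1 : ℝ) / 2) (by norm_num)
    have h : (fun t : ℝ => Real.exp (-t ^ 2 / 2)) =
        fun t : ℝ => Real.exp (-(1 / 2) * t ^ 2) := by funext t; ring_nf
    rw [h]; exact this.integrableOn
  · have := integrable_mul_exp_neg_mul_sq (b := (1 : ℝ) / 2) (by norm_num)
    have h : (fun t : ℝ => t * Real.exp (-t ^ 2 / 2)) =
        fun t : ℝ => t * Real.exp (-(1 / 2) * t ^ 2) := by funext t; ring_nf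
    rw [h]; exact this.integrableOn
  · exact measurableSet_Ioi
  · intro t ht
    have h1 : (1 : ℝ) ≤ t := hx.trans ht.out.le
    nlinarith [Real.exp_pos (-t ^ 2 / 2)]

/-- If the LLR mean satisfies `m ≥ 4.66 n ln 2 − 4.66 s ln 2 + 14.92 ln 2`, the
Gaussian-approximation bit error rate satisfies
`Q(√(m/2)) < 2^{−2.33(n−s)/2 − 3.73}`, i.e. it decays as `O(N^{−2.33/2})` for `N = 2^n`. -/
theorem ga_ber_bound (s n : ℕ) (hsn : s ≤ n) (m : ℝ)
    (hm : m ≥ 4.66 * (n : ℝ) * Real.log 2 - 4.66 * (s : ℝ) * Real.log 2 + 14.92 * Real.log 2) :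
    gaussQ (Real.sqrt (m / 2)) < (2 : ℝ) ^ (-(2.33 * ((n : ℝ) - s)) / 2 - 3.73) := by
  have hlog2 : (0.693 : ℝ) < Real.log 2 := by
    have := Real.log_two_gt_d9; linarith
  have hns : (0 : ℝ) ≤ (n : ℝ) - s := by
    have := (Nat.cast_le (α := ℝ)).mpr hsn; linarith
  have hm0 : (7 : ℝ) ≤ m := by nlinarith
  set x := Real.sqrt (m / 2) with hxdef
  have hx2 : x ^ 2 = m / 2 := Real.sq_sqrt (by linarith)
  have hx1 : (1 : ℝ) ≤ x := by
    nlinarith [Real.sqrt_nonneg (m / 2), hx2]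
  have hQ : gaussQ x ≤ (1 / Real.sqrt (2 * Real.pi)) * Real.exp (-x ^ 2 / 2) := by
    unfold gaussQ
    have hc : 0 ≤ 1 / Real.sqrt (2 * Real.pi) := by positivity
    exact mul_le_mul_of_nonneg_left (qtail_le hx1) hc
  have hpi : (1 : ℝ) < Real.sqrt (2 * Real.pi) := by
    have : (1 : ℝ) < 2 * Real.pi := by nlinarith [Real.pi_gt_three]
    nlinarith [Real.sq_sqrt (le_of_lt (lt_trans one_pos this)),
      Real.sqrt_nonneg (2 * Real.pi)]
  have hc1 : 1 / Real.sqrt (2 * Real.pi) < 1 := by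
    rw [div_lt_one (by linarith)]; exact hpi
  have hstrict : gaussQ x < Real.exp (-x ^ 2 / 2) := by
    calc gaussQ x ≤ (1 / Real.sqrt (2 * Real.pi)) * Real.exp (-x ^ 2 / 2) := hQ
    _ < 1 * Real.exp (-x ^ 2 / 2) := by
        apply mul_lt_mul_of_pos_right hc1 (Real.exp_pos _)
    _ = Real.exp (-x ^ 2 / 2) := one_mul _
  have hrhs : Real.exp (-x ^ 2 / 2) ≤ (2 : ℝ) ^ (-(2.33 * ((n : ℝ) - s)) / 2 - 3.73) := by
    rw [Real.rpow_def_of_pos (by norm_num : (0:ℝ) < 2)]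
    apply Real.exp_le_exp.mpr
    rw [hx2]
    nlinarith [Real.log_pos (by norm_num : (1:ℝ) < 2)]
  linarith
end
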